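/- Let $h \in (0, 1/2]$. If $u_h$ is a continuous piecewise linear function on the mesh $\{-1,-h,0,h,1\}$ with $u_h(-1)=-1$, $u_h(1)=1$ that minimizes $\int_{-1}^1 |\mathrm{sgn}(x)-v(x)|\,dx$ among all such functions $v$, then $u_h(-h) = -1$, $u_h(h)=1$, and $u_h(0) \in [-1,1]$. -/

import Mathlib

open MeasureTheory

/-- Linear interpolation between `(x0, y0)` and `(x1, y1)`. -/
noncomputable def interp (x0 x1 y0 y1 x : ℝ) : ℝ :=
  y0 + (y1 - y0) * (x - x0) / (x1 - x0)

/-- Continuous piecewise linear function on the mesh `{-1, -h, 0, h, 1}` with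
nodal values `a, b, c, d, e`. -/
noncomputable def mesh4 (h a b c d e : ℝ) (x : ℝ) : ℝ :=
  if x ≤ -h then interp (-1) (-h) a b x
  else if x ≤ 0 then interp (-h) 0 b c x
  else if x ≤ h then interp 0 h c d x
  else interp h 1 d e x

open intervalIntegral

lemma affine_ii (α β A B : ℝ) : IntervalIntegrable (fun x => α*x+β) volume A B :=
  ((continuous_const.mul continuous_id).add continuous_const).intervalIntegrable _ _

lemma abs_affine_ii (α β A B : ℝ) : IntervalIntegrable (fun x => |α*x+β|) volume A B :=
  ((continuous_const.mul continuous_id).add continuous_const).abs.intervalIntegrable _ _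

lemma int_affine (α β A B : ℝ) :
    ∫ x in A..B, (α*x+β) = (B-A)*(((α*A+β)+(α*B+β))/2) := by
  rw [intervalIntegral.integral_add ((continuous_mul_left α).intervalIntegrable _ _ : IntervalIntegrable (fun x:ℝ => α*x) volume A B)
    (intervalIntegrable_const), intervalIntegral.integral_const_mul, integral_id, intervalIntegral.integral_const]
  simp; ring

lemma abs_affine_ge (α β A B : ℝ) (hAB : A ≤ B) {P Q : ℝ}
    (hP : α*A+β = P) (hQ : α*B+β = Q) :
    (B-A)*|P+Q|/2 ≤ ∫ x in A..B, |α*x+β| := by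
  have h := intervalIntegral.abs_integral_le_integral_abs (f := fun x => α*x+β) (μ := volume) hAB
  rw [int_affine, hP, hQ] at h
  calc (B-A)*|P+Q|/2 = |(B-A)*((P+Q)/2)| := by
        rw [abs_mul, abs_of_nonneg (by linarith : (0:ℝ) ≤ B - A), abs_div]
        simp; ring
    _ ≤ _ := h

lemma abs_affine_gt_left (α β A B : ℝ) (hAB : A < B) {P Q : ℝ}
    (hP : α*A+β = P) (hQ : α*B+β = Q) (hP0 : P ≠ 0) :
    (B-A)*(|Q|-|P|)/2 < ∫ x in A..B, |α*x+β| := by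
  rcases le_or_gt 0 (P*Q) with hpq | hpq
  · have hge := abs_affine_ge α β A B hAB.le hP hQ
    have hQP : |P+Q| = |P|+|Q| := by
      rcases le_or_gt 0 P with h1 | h1
      · have h1' : 0 < P := lt_of_le_of_ne h1 (Ne.symm hP0)
        have h2 : 0 ≤ Q := by nlinarith
        rw [abs_of_nonneg (by linarith : (0:ℝ) ≤ P + Q), abs_of_nonneg h1, abs_of_nonneg h2]
      · have h2 : Q ≤ 0 := by nlinarith
        rw [abs_of_nonpos (by linarith : P + Q ≤ 0), abs_of_nonpos h1.le, abs_of_nonpos h2]; ring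
    rw [hQP] at hge
    have hpos : 0 < |P| := abs_pos.mpr hP0
    nlinarith [hge]
  · have hα : α ≠ 0 := by
      intro h0; rw [h0] at hP hQ; simp only [zero_mul, zero_add] at hP hQ
      rw [← hP, ← hQ] at hpq; nlinarith [mul_self_nonneg β]
    obtain ⟨x₀, hx0⟩ : ∃ x₀, α*x₀+β = 0 := ⟨-β/α, by field_simp; ring⟩
    have hPx : P = α*(A - x₀) := by rw [← hP]; linear_combination hx0
    have hQx : Q = α*(B - x₀) := by rw [← hQ]; linear_combination hx0
    have hpq' : (α*(A-x₀))*(α*(B-x₀)) < 0 := by rw [← hPx, ← hQx]; exact hpq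
    have h1 : A < x₀ := by
      by_contra hcon
      push_neg at hcon
      nlinarith [mul_nonneg (mul_nonneg (mul_self_nonneg α) (by linarith : (0:ℝ) ≤ A - x₀))
        (by linarith : (0:ℝ) ≤ B - x₀)]
    have h2 : x₀ < B := by
      by_contra hcon
      push_neg at hcon
      nlinarith [mul_nonneg (mul_self_nonneg α)
        (mul_nonneg (by linarith : (0:ℝ) ≤ x₀ - A) (by linarith : (0:ℝ) ≤ x₀ - B))]
    have hsplit : ∫ x in A..B, |α*x+β| =
        (∫ x in A..x₀, |α*x+β|) + ∫ x in x₀..B, |α*x+β| :=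
      (integral_add_adjacent_intervals (abs_affine_ii α β A x₀) (abs_affine_ii α β x₀ B)).symm
    have g1 := abs_affine_ge α β A x₀ h1.le hP hx0
    have g2 := abs_affine_ge α β x₀ B h2.le hx0 hQ
    rw [add_zero] at g1
    rw [zero_add] at g2
    have hPa : |P| = |α| *(x₀-A) := by
      calc |P| = abs α * abs (A - x₀) := by rw [hPx, abs_mul]
        _ = |α| *(x₀-A) := by rw [abs_of_nonpos (by linarith : A - x₀ ≤ 0)]; ring
    have hQa : |Q| = |α| *(B-x₀) := by
      calc |Q| = abs α * abs (B - x₀) := by rw [hQx, abs_mul]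
        _ = |α| *(B-x₀) := by rw [abs_of_nonneg (by linarith : (0:ℝ) ≤ B - x₀)]
    have hαpos : 0 < |α| := abs_pos.mpr hα
    rw [hsplit]
    rw [hPa] at g1
    rw [hQa] at g2
    rw [hPa, hQa]
    nlinarith [g1, g2, mul_pos hαpos (mul_pos (by linarith : (0:ℝ) < x₀ - A)
      (by linarith : (0:ℝ) < x₀ - A))]

lemma abs_affine_gt_right (α β A B : ℝ) (hAB : A < B) {P Q : ℝ}
    (hP : α*A+β = P) (hQ : α*B+β = Q) (hQ0 : Q ≠ 0) :
    (B-A)*(|P|-|Q|)/2 < ∫ x in A..B, |α*x+β| := by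
  have key : (∫ x in (-B)..(-A), abs ((-α) * x + β)) = ∫ x in A..B, |α*x+β| := by
    have := intervalIntegral.integral_comp_neg (a := -B) (b := -A) (fun y => |α*y+β|)
    simp only [neg_neg] at this
    rw [← this]
    congr 1; funext x; ring_nf
  have hs := abs_affine_gt_left (-α) β (-B) (-A) (by linarith)
    (show (-α)*(-B)+β = Q by rw [← hQ]; ring)
    (show (-α)*(-A)+β = P by rw [← hP]; ring) hQ0
  rw [key] at hs
  convert hs using 2
  ring

lemma ii_congr {f g : ℝ → ℝ} {a b : ℝ} (hf : IntervalIntegrable f volume a b)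
    (hfg : ∀ᵐ x, x ∈ Set.uIoc a b → f x = g x) : IntervalIntegrable g volume a b := by
  rw [intervalIntegrable_iff] at hf ⊢
  exact hf.congr ((ae_restrict_iff' measurableSet_uIoc).mpr hfg)

lemma decomp (h b c d : ℝ) (hh0 : 0 < h) (hh : h ≤ 1/2) :
    (∫ x in (-1:ℝ)..1, |Real.sign x - mesh4 h (-1) b c d 1 x|) =
      (∫ x in (-1:ℝ)..(-h), |(-(1+b)/(1-h)) * x + (-(1+b)/(1-h))|) +
      ((∫ x in (-h:ℝ)..0, |(-(c-b)/h) * x + (-(1+c))|) +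
      ((∫ x in (0:ℝ)..h, |(-(d-c)/h) * x + (1-c)|) +
      (∫ x in (h:ℝ)..1, |(-(1-d)/(1-h)) * x + ((1-d)/(1-h))|))) := by
  have h1h : (0:ℝ) < 1 - h := by linarith
  have hne0 : ∀ᵐ (x:ℝ), x ≠ 0 := compl_mem_ae_iff.mpr (measure_singleton 0)
  have a1 : ∀ᵐ x, x ∈ Set.uIoc (-1:ℝ) (-h) →
      |Real.sign x - mesh4 h (-1) b c d 1 x| = |(-(1+b)/(1-h)) * x + (-(1+b)/(1-h))| := by
    apply Filter.Eventually.of_forall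
    intro x hx
    rw [Set.uIoc_of_le (by linarith : (-1:ℝ) ≤ -h)] at hx
    obtain ⟨hx1, hx2⟩ := hx
    rw [mesh4, if_pos hx2, Real.sign_of_neg (by linarith : x < 0), interp]
    rw [show -h - (-1:ℝ) = 1 - h from by ring]
    congr 1
    field_simp [h1h.ne', hh0.ne']
    ring
  have a2 : ∀ᵐ x, x ∈ Set.uIoc (-h:ℝ) 0 →
      |Real.sign x - mesh4 h (-1) b c d 1 x| = |(-(c-b)/h) * x + (-(1+c))| := by
    filter_upwards [hne0] with x hx0 hx
    rw [Set.uIoc_of_le (by linarith : (-h:ℝ) ≤ 0)] at hx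
    obtain ⟨hx1, hx2⟩ := hx
    have hxneg : x < 0 := lt_of_le_of_ne hx2 hx0
    rw [mesh4, if_neg (not_le.mpr hx1), if_pos hx2, Real.sign_of_neg hxneg, interp]
    rw [show (0:ℝ) - -h = h from by ring]
    congr 1
    field_simp [h1h.ne', hh0.ne']
    ring
  have a3 : ∀ᵐ x, x ∈ Set.uIoc (0:ℝ) h →
      |Real.sign x - mesh4 h (-1) b c d 1 x| = |(-(d-c)/h) * x + (1-c)| := by
    apply Filter.Eventually.of_forall
    intro x hx
    rw [Set.uIoc_of_le (by linarith : (0:ℝ) ≤ h)] at hx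
    obtain ⟨hx1, hx2⟩ := hx
    rw [mesh4, if_neg (not_le.mpr (by linarith : -h < x)), if_neg (not_le.mpr hx1),
      if_pos hx2, Real.sign_of_pos hx1, interp]
    rw [show (h:ℝ) - 0 = h from by ring]
    congr 1
    field_simp [h1h.ne', hh0.ne']
    ring
  have a4 : ∀ᵐ x, x ∈ Set.uIoc (h:ℝ) 1 →
      |Real.sign x - mesh4 h (-1) b c d 1 x| = |(-(1-d)/(1-h)) * x + ((1-d)/(1-h))| := by
    apply Filter.Eventually.of_forall
    intro x hx
    rw [Set.uIoc_of_le (by linarith : (h:ℝ) ≤ 1)] at hx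
    obtain ⟨hx1, hx2⟩ := hx
    rw [mesh4, if_neg (not_le.mpr (by linarith : -h < x)),
      if_neg (not_le.mpr (by linarith : (0:ℝ) < x)), if_neg (not_le.mpr hx1),
      Real.sign_of_pos (by linarith : (0:ℝ) < x), interp]
    congr 1
    field_simp [h1h.ne', hh0.ne']
    ring
  have i1 : IntervalIntegrable (fun x => |Real.sign x - mesh4 h (-1) b c d 1 x|)
      volume (-1) (-h) :=
    ii_congr (abs_affine_ii _ _ _ _) (a1.mono fun x hx hm => (hx hm).symm)
  have i2 : IntervalIntegrable (fun x => |Real.sign x - mesh4 h (-1) b c d 1 x|)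
      volume (-h) 0 :=
    ii_congr (abs_affine_ii _ _ _ _) (a2.mono fun x hx hm => (hx hm).symm)
  have i3 : IntervalIntegrable (fun x => |Real.sign x - mesh4 h (-1) b c d 1 x|)
      volume 0 h :=
    ii_congr (abs_affine_ii _ _ _ _) (a3.mono fun x hx hm => (hx hm).symm)
  have i4 : IntervalIntegrable (fun x => |Real.sign x - mesh4 h (-1) b c d 1 x|)
      volume h 1 :=
    ii_congr (abs_affine_ii _ _ _ _) (a4.mono fun x hx hm => (hx hm).symm)
  rw [← integral_add_adjacent_intervals (a := (-1:ℝ)) (b := -h) (c := 1) i1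
      (i2.trans (i3.trans i4)),
    ← integral_add_adjacent_intervals (a := (-h:ℝ)) (b := 0) (c := 1) i2 (i3.trans i4),
    ← integral_add_adjacent_intervals (a := (0:ℝ)) (b := h) (c := 1) i3 i4,
    intervalIntegral.integral_congr_ae a1, intervalIntegral.integral_congr_ae a2,
    intervalIntegral.integral_congr_ae a3, intervalIntegral.integral_congr_ae a4]

lemma competitor (h : ℝ) (hh0 : 0 < h) (hh : h ≤ 1/2) :
    (∫ x in (-1:ℝ)..1, |Real.sign x - mesh4 h (-1) (-1) 0 1 1 x|) = h := by
  rw [decomp h (-1) 0 1 hh0 hh]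
  have c1 : (∫ x in (-1:ℝ)..(-h), |(-(1+(-1))/(1-h)) * x + (-(1+(-1))/(1-h))|) = 0 := by
    norm_num
  have c4 : (∫ x in (h:ℝ)..1, |(-(1-1)/(1-h)) * x + ((1-1)/(1-h))|) = 0 := by
    norm_num
  have c2 : (∫ x in (-h:ℝ)..0, |(-((0:ℝ)-(-1))/h) * x + (-(1+0))|) = h/2 := by
    have ae : ∀ᵐ x, x ∈ Set.uIoc (-h:ℝ) 0 →
        |(-((0:ℝ)-(-1))/h) * x + (-(1+0))| = (1/h) * x + 1 := by
      apply Filter.Eventually.of_forall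
      intro x hx
      rw [Set.uIoc_of_le (by linarith : (-h:ℝ) ≤ 0)] at hx
      obtain ⟨hx1, hx2⟩ := hx
      rw [show (-((0:ℝ)-(-1))/h) * x + (-(1+0)) = -((1/h) * x + 1) from by ring, abs_neg]
      apply abs_of_nonneg
      have e1 : (1/h) * (-h) = -1 := by field_simp
      have e2 : (1/h) * (-h) ≤ (1/h) * x :=
        mul_le_mul_of_nonneg_left (by linarith) (by positivity)
      linarith
    rw [intervalIntegral.integral_congr_ae ae, int_affine]
    field_simp; ring
  have c3 : (∫ x in (0:ℝ)..h, |(-((1:ℝ)-0)/h) * x + (1-0)|) = h/2 := by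
    have ae : ∀ᵐ x, x ∈ Set.uIoc (0:ℝ) h →
        |(-((1:ℝ)-0)/h) * x + (1-0)| = (-1/h) * x + 1 := by
      apply Filter.Eventually.of_forall
      intro x hx
      rw [Set.uIoc_of_le (by linarith : (0:ℝ) ≤ h)] at hx
      obtain ⟨hx1, hx2⟩ := hx
      rw [show (-((1:ℝ)-0)/h) * x + (1-0) = (-1/h) * x + 1 from by ring]
      apply abs_of_nonneg
      have e1 : (-1/h) * h = -1 := by field_simp
      have e2 : (-1/h) * x ≥ (-1/h) * h := by
        apply mul_le_mul_of_nonpos_left (by linarith)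
        apply div_nonpos_of_nonpos_of_nonneg <;> linarith
      linarith
    rw [intervalIntegral.integral_congr_ae ae, int_affine]
    field_simp; ring
  rw [c1, c2, c3, c4]
  ring

set_option maxHeartbeats 1000000 in
theorem stmt10 (h : ℝ) (hh0 : 0 < h) (hh : h ≤ 1 / 2) (b₀ c₀ d₀ : ℝ)
    (hmin : ∀ b c d : ℝ,
      (∫ x in (-1:ℝ)..1, |Real.sign x - mesh4 h (-1) b₀ c₀ d₀ 1 x|) ≤
        ∫ x in (-1:ℝ)..1, |Real.sign x - mesh4 h (-1) b c d 1 x|) :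
    b₀ = -1 ∧ d₀ = 1 ∧ c₀ ∈ Set.Icc (-1 : ℝ) 1 := by
  have h1h : (0:ℝ) < 1 - h := by linarith
  have hS := hmin (-1) 0 1
  rw [competitor h hh0 (by linarith), decomp h b₀ c₀ d₀ hh0 (by linarith)] at hS
  have G1 : (-h - -1) * |1+b₀| / 2 ≤
      ∫ x in (-1:ℝ)..(-h), |(-(1+b₀)/(1-h)) * x + (-(1+b₀)/(1-h))| := by
    have := abs_affine_ge (-(1+b₀)/(1-h)) (-(1+b₀)/(1-h)) (-1) (-h) (by linarith)
      (show (-(1+b₀)/(1-h)) * (-1) + (-(1+b₀)/(1-h)) = 0 by ring)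
      (show (-(1+b₀)/(1-h)) * (-h) + (-(1+b₀)/(1-h)) = -(1+b₀) by field_simp [h1h.ne']; ring)
    rwa [zero_add, abs_neg] at this
  have G4 : (1 - h) * |1-d₀| / 2 ≤
      ∫ x in (h:ℝ)..1, |(-(1-d₀)/(1-h)) * x + ((1-d₀)/(1-h))| := by
    have := abs_affine_ge (-(1-d₀)/(1-h)) ((1-d₀)/(1-h)) h 1 (by linarith)
      (show (-(1-d₀)/(1-h)) * h + ((1-d₀)/(1-h)) = (1-d₀) by field_simp [h1h.ne']; ring)
      (show (-(1-d₀)/(1-h)) * 1 + ((1-d₀)/(1-h)) = 0 by ring)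
    rwa [add_zero] at this
  have G2ge : (0 - -h) * |(1+b₀)+(1+c₀)| / 2 ≤
      ∫ x in (-h:ℝ)..0, |(-(c₀-b₀)/h) * x + (-(1+c₀))| := by
    have := abs_affine_ge (-(c₀-b₀)/h) (-(1+c₀)) (-h) 0 (by linarith)
      (show (-(c₀-b₀)/h) * (-h) + (-(1+c₀)) = -(1+b₀) by field_simp [hh0.ne']; ring)
      (show (-(c₀-b₀)/h) * 0 + (-(1+c₀)) = -(1+c₀) by ring)
    rwa [show -(1+b₀) + -(1+c₀) = -((1+b₀)+(1+c₀)) from by ring, abs_neg] at this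
  have G3ge : (h - 0) * |(1-c₀)+(1-d₀)| / 2 ≤
      ∫ x in (0:ℝ)..h, |(-(d₀-c₀)/h) * x + (1-c₀)| :=
    abs_affine_ge (-(d₀-c₀)/h) (1-c₀) 0 h (by linarith)
      (show (-(d₀-c₀)/h) * 0 + (1-c₀) = (1-c₀) by ring)
      (show (-(d₀-c₀)/h) * h + (1-c₀) = (1-d₀) by field_simp [hh0.ne']; ring)
  have m1 : 0 ≤ h * (|1+c₀| + |1-c₀| - 2) :=
    mul_nonneg hh0.le (by linarith [le_abs_self (1+c₀), le_abs_self (1-c₀)])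
  have m2 : 0 ≤ (1-2*h) * |1+b₀| := mul_nonneg (by linarith) (abs_nonneg _)
  have m3 : 0 ≤ (1-2*h) * |1-d₀| := mul_nonneg (by linarith) (abs_nonneg _)
  have hb : b₀ = -1 := by
    by_contra hbne
    have hP0 : -(1+b₀) ≠ 0 := fun hcon => hbne (by linarith)
    have G2 := abs_affine_gt_left (-(c₀-b₀)/h) (-(1+c₀)) (-h) 0 (by linarith)
      (show (-(c₀-b₀)/h) * (-h) + (-(1+c₀)) = -(1+b₀) by field_simp [hh0.ne']; ring)
      (show (-(c₀-b₀)/h) * 0 + (-(1+c₀)) = -(1+c₀) by ring) hP0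
    rw [abs_neg, abs_neg] at G2
    have f2 : |1-c₀| - |1-d₀| ≤ |(1-c₀)+(1-d₀)| := by
      have := abs_sub_abs_le_abs_sub (1-c₀) (-(1-d₀))
      rwa [abs_neg, show (1-c₀) - -(1-d₀) = (1-c₀)+(1-d₀) from by ring] at this
    have m4 : 0 ≤ h * (|(1-c₀)+(1-d₀)| - (|1-c₀| - |1-d₀|)) :=
      mul_nonneg hh0.le (by linarith)
    nlinarith [G1, G2, G3ge, G4, hS, m1, m2, m3, m4]
  have hd : d₀ = 1 := by
    by_contra hdne
    have hQ0 : (1-d₀) ≠ 0 := fun hcon => hdne (by linarith)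
    have G3 := abs_affine_gt_right (-(d₀-c₀)/h) (1-c₀) 0 h (by linarith)
      (show (-(d₀-c₀)/h) * 0 + (1-c₀) = (1-c₀) by ring)
      (show (-(d₀-c₀)/h) * h + (1-c₀) = (1-d₀) by field_simp [hh0.ne']; ring) hQ0
    have f1 : |1+c₀| - |1+b₀| ≤ |(1+b₀)+(1+c₀)| := by
      have := abs_sub_abs_le_abs_sub (1+c₀) (-(1+b₀))
      rwa [abs_neg, show (1+c₀) - -(1+b₀) = (1+b₀)+(1+c₀) from by ring] at this
    have m4 : 0 ≤ h * (|(1+b₀)+(1+c₀)| - (|1+c₀| - |1+b₀|)) :=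
      mul_nonneg hh0.le (by linarith)
    nlinarith [G1, G2ge, G3, G4, hS, m1, m2, m3, m4]
  refine ⟨hb, hd, ?_⟩
  have E2 : |(1+b₀)+(1+c₀)| = |1+c₀| := by
    rw [show (1+b₀)+(1+c₀) = 1+c₀ by rw [hb]; ring]
  have E3 : |(1-c₀)+(1-d₀)| = |1-c₀| := by
    rw [show (1-c₀)+(1-d₀) = 1-c₀ by rw [hd]; ring]
  have n1 : 0 ≤ ∫ x in (-1:ℝ)..(-h), |(-(1+b₀)/(1-h)) * x + (-(1+b₀)/(1-h))| :=
    intervalIntegral.integral_nonneg (by linarith) (fun u _ => abs_nonneg _)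
  have n4 : 0 ≤ ∫ x in (h:ℝ)..1, |(-(1-d₀)/(1-h)) * x + ((1-d₀)/(1-h))| :=
    intervalIntegral.integral_nonneg (by linarith) (fun u _ => abs_nonneg _)
  have hsum : |1+c₀| + |1-c₀| ≤ 2 := by
    by_contra hc
    push_neg at hc
    nlinarith [G2ge, G3ge, n1, n4, hS, E2, E3,
      mul_pos hh0 (show 0 < |1+c₀| + |1-c₀| - 2 by linarith)]
  exact Set.mem_Icc.mpr ⟨by linarith [neg_abs_le (1+c₀), le_abs_self (1-c₀)],
    by linarith [le_abs_self (1+c₀), neg_abs_le (1-c₀)]⟩
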